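/- Let B be a left H-module equipped with a k-bilinear product · and an element 1_B such that, writing ▷ for the H-action on B, for all h ∈ H and b, c, d ∈ B: h▷(b·c) = (h₁▷b)·(h₂▷c); h▷1_B = ε(h)1_B; (b·c)·d = (X¹▷b)·((X²▷c)·(X³▷d)); and 1_B·b = b = b·1_B. Then the k-bilinear product on B⊗H defined by (b⊗h)(c⊗g) = (x¹▷b)·(x²h₁▷c) ⊗ x³h₂g is associative with two-sided unit 1_B⊗1; that is, the bosonisation B⋊·H is a unital associative k-algebra. -/

import Mathlib

open scoped TensorProduct
open TensorProduct
noncomputable section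
set_option linter.unusedSectionVars false
set_option synthInstance.maxHeartbeats 1000000
set_option maxHeartbeats 1000000


open scoped TensorProduct
open TensorProduct

structure QuasiHopf (k H : Type) [Field k] [Ring H] [Algebra k H] where
  comul : H →ₐ[k] H ⊗[k] H
  counit : H →ₐ[k] k
  counit_left : ∀ h : H,
    (TensorProduct.lid k H) ((TensorProduct.map counit.toLinearMap (LinearMap.id : H →ₗ[k] H)) (comul h)) = h
  counit_right : ∀ h : H,
    (TensorProduct.rid k H) ((TensorProduct.map (LinearMap.id : H →ₗ[k] H) counit.toLinearMap) (comul h)) = h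
  phi : H ⊗[k] (H ⊗[k] H)
  phiInv : H ⊗[k] (H ⊗[k] H)
  phi_inv : phi * phiInv = 1
  inv_phi : phiInv * phi = 1
  quasi_coassoc : ∀ h : H,
    (TensorProduct.map (LinearMap.id : H →ₗ[k] H) comul.toLinearMap) (comul h)
      = phi * ((TensorProduct.assoc k H H H)
          ((TensorProduct.map comul.toLinearMap (LinearMap.id : H →ₗ[k] H)) (comul h))) * phiInv
  pentagon :
    ((1 : H) ⊗ₜ[k] phi)
      * ((TensorProduct.map (LinearMap.id : H →ₗ[k] H)
            ((TensorProduct.assoc k H H H).toLinearMap ∘ₗ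
              TensorProduct.map comul.toLinearMap (LinearMap.id : H →ₗ[k] H))) phi)
      * ((TensorProduct.map (LinearMap.id : H →ₗ[k] H) (TensorProduct.assoc k H H H).toLinearMap)
            ((TensorProduct.assoc k H (H ⊗[k] H) H) (phi ⊗ₜ[k] (1 : H))))
    = ((TensorProduct.map (LinearMap.id : H →ₗ[k] H)
          (TensorProduct.map (LinearMap.id : H →ₗ[k] H) comul.toLinearMap)) phi)
      * ((TensorProduct.assoc k H H (H ⊗[k] H))
          ((TensorProduct.map comul.toLinearMap (LinearMap.id : H ⊗[k] H →ₗ[k] H ⊗[k] H)) phi))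
  counit_phi :
    (TensorProduct.map (LinearMap.id : H →ₗ[k] H)
        ((TensorProduct.lid k H).toLinearMap ∘ₗ
          TensorProduct.map counit.toLinearMap (LinearMap.id : H →ₗ[k] H))) phi = 1
  S : H →ₗ[k] H
  Sinv : H →ₗ[k] H
  S_mul : ∀ a b : H, S (a * b) = S b * S a
  S_one : S 1 = 1
  S_Sinv : ∀ h : H, S (Sinv h) = h
  Sinv_S : ∀ h : H, Sinv (S h) = h
  alpha : H
  beta : H
  antipode_left : ∀ (h : H) (n : ℕ) (h1 h2 : Fin n → H),
    comul h = ∑ i, h1 i ⊗ₜ[k] h2 i → ∑ i, S (h1 i) * alpha * h2 i = counit h • alpha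
  antipode_right : ∀ (h : H) (n : ℕ) (h1 h2 : Fin n → H),
    comul h = ∑ i, h1 i ⊗ₜ[k] h2 i → ∑ i, h1 i * beta * S (h2 i) = counit h • beta
  antipode_phi : ∀ (n : ℕ) (X1 X2 X3 : Fin n → H),
    phi = ∑ i, X1 i ⊗ₜ[k] (X2 i ⊗ₜ[k] X3 i) →
      ∑ i, X1 i * beta * S (X2 i) * alpha * X3 i = 1
  antipode_phiInv : ∀ (n : ℕ) (x1 x2 x3 : Fin n → H),
    phiInv = ∑ i, x1 i ⊗ₜ[k] (x2 i ⊗ₜ[k] x3 i) →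
      ∑ i, S (x1 i) * alpha * x2 i * beta * S (x3 i) = 1

section Defs
variable {k H : Type} [Field k] [Ring H] [Algebra k H]
variable {B : Type} [AddCommGroup B] [Module k B] [Module H B]
  [IsScalarTower k H B] [SMulCommClass k H B]

/-- action on a fixed element as a k-linear map -/
def abL (b : B) : H →ₗ[k] B where
  toFun u := u • b
  map_add' x y := add_smul x y b
  map_smul' c x := smul_assoc c x b

@[simp] lemma abL_apply (b : B) (u : H) : (abL (k := k) b) u = u • b := rfl

variable (mulB : B →ₗ[k] B →ₗ[k] B)

/-- `u ⊗ (v ⊗ w) ↦ (u•b)·(v•c) ⊗ w` -/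
def GG (b c : B) : H ⊗[k] (H ⊗[k] H) →ₗ[k] B ⊗[k] H :=
  (TensorProduct.map (TensorProduct.lift mulB) LinearMap.id) ∘ₗ
    (TensorProduct.assoc k B B H).symm.toLinearMap ∘ₗ
      (TensorProduct.map (abL b) (TensorProduct.map (abL c) LinearMap.id))

@[simp] lemma GG_tmul (b c : B) (u v w : H) :
    GG mulB b c (u ⊗ₜ[k] (v ⊗ₜ[k] w)) = mulB (u • b) (v • c) ⊗ₜ[k] w := by
  simp [GG]

/-- `B ⊗ (B ⊗ H) → B ⊗ H`, multiply first two -/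
def m2 : B ⊗[k] (B ⊗[k] H) →ₗ[k] B ⊗[k] H :=
  (TensorProduct.map (TensorProduct.lift mulB) LinearMap.id) ∘ₗ
    (TensorProduct.assoc k B B H).symm.toLinearMap

/-- `p ⊗ (q ⊗ (r ⊗ w)) ↦ (p•b)·((q•c)·(r•d)) ⊗ w` -/
def KK (b c d : B) : H ⊗[k] (H ⊗[k] (H ⊗[k] H)) →ₗ[k] B ⊗[k] H :=
  m2 mulB ∘ₗ (TensorProduct.map LinearMap.id (m2 mulB)) ∘ₗ
    (TensorProduct.map (abL b) (TensorProduct.map (abL c) (TensorProduct.map (abL d) LinearMap.id)))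

@[simp] lemma KK_tmul (b c d : B) (p q r w : H) :
    KK mulB b c d (p ⊗ₜ[k] (q ⊗ₜ[k] (r ⊗ₜ[k] w)))
      = mulB (p • b) (mulB (q • c) (r • d)) ⊗ₜ[k] w := by
  simp [KK, m2]

/-- `u ⊗ v ↦ (u•b)·(v•c)` -/
def F2L (b c : B) : H ⊗[k] H →ₗ[k] B :=
  TensorProduct.lift mulB ∘ₗ TensorProduct.map (abL b) (abL c)

@[simp] lemma F2L_tmul (b c : B) (u v : H) :
    F2L mulB b c (u ⊗ₜ[k] v) = mulB (u • b) (v • c) := by simp [F2L]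

/-- `u ⊗ (v ⊗ w) ↦ (u•b)·((v•c)·(w•d))` -/
def F3L (b c d : B) : H ⊗[k] (H ⊗[k] H) →ₗ[k] B :=
  TensorProduct.lift mulB ∘ₗ TensorProduct.map LinearMap.id (TensorProduct.lift mulB) ∘ₗ
    TensorProduct.map (abL b) (TensorProduct.map (abL c) (abL d))

@[simp] lemma F3L_tmul (b c d : B) (u v w : H) :
    F3L mulB b c d (u ⊗ₜ[k] (v ⊗ₜ[k] w)) = mulB (u • b) (mulB (v • c) (w • d)) := by
  simp [F3L]

end Defs

section Alg
variable {k H : Type} [Field k] [Ring H] [Algebra k H]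

abbrev T2 (k H : Type) [Field k] [Ring H] [Algebra k H] := H ⊗[k] H
abbrev T3 (k H : Type) [Field k] [Ring H] [Algebra k H] := H ⊗[k] (H ⊗[k] H)
abbrev T4 (k H : Type) [Field k] [Ring H] [Algebra k H] := H ⊗[k] (H ⊗[k] (H ⊗[k] H))

variable (cm : H →ₐ[k] H ⊗[k] H) (ct : H →ₐ[k] k)

def d1A : T2 k H →ₐ[k] T3 k H :=
  (Algebra.TensorProduct.assoc k k k H H H).toAlgHom.comp
    (Algebra.TensorProduct.map cm (AlgHom.id k H))

def d2A : T2 k H →ₐ[k] T3 k H := Algebra.TensorProduct.map (AlgHom.id k H) cm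

@[simp] lemma d1A_tmul (a b : H) : d1A cm (a ⊗ₜ[k] b) = (Algebra.TensorProduct.assoc k k k H H H) (cm a ⊗ₜ[k] b) := rfl
@[simp] lemma d2A_tmul (a b : H) : d2A cm (a ⊗ₜ[k] b) = a ⊗ₜ[k] cm b := rfl

def j123A : T3 k H →ₐ[k] T4 k H :=
  Algebra.TensorProduct.map (AlgHom.id k H)
    (Algebra.TensorProduct.map (AlgHom.id k H) Algebra.TensorProduct.includeLeft)

def j12A : T3 k H →ₐ[k] T4 k H :=
  (Algebra.TensorProduct.assoc k k k H H (H ⊗[k] H)).toAlgHom.comp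
    (Algebra.TensorProduct.map cm (AlgHom.id k (H ⊗[k] H)))

def j23A : T3 k H →ₐ[k] T4 k H :=
  Algebra.TensorProduct.map (AlgHom.id k H) (d1A cm)

def j34A : T3 k H →ₐ[k] T4 k H :=
  Algebra.TensorProduct.map (AlgHom.id k H) (d2A cm)

def i234A : T3 k H →ₐ[k] T4 k H := Algebra.TensorProduct.includeRight

@[simp] lemma j123A_tmul (u : H) (s : H ⊗[k] H) :
    j123A (u ⊗ₜ[k] s) = u ⊗ₜ[k] (Algebra.TensorProduct.map (AlgHom.id k H)
      (Algebra.TensorProduct.includeLeft : H →ₐ[k] H ⊗[k] H) s) := rfl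
@[simp] lemma j123A_tmul' (u v w : H) :
    j123A (u ⊗ₜ[k] (v ⊗ₜ[k] w)) = u ⊗ₜ[k] (v ⊗ₜ[k] (w ⊗ₜ[k] (1:H))) := rfl
@[simp] lemma j12A_tmul (u : H) (s : H ⊗[k] H) :
    j12A cm (u ⊗ₜ[k] s) = (Algebra.TensorProduct.assoc k k k H H (H ⊗[k] H)) (cm u ⊗ₜ[k] s) := rfl
@[simp] lemma j23A_tmul (u : H) (s : H ⊗[k] H) :
    j23A cm (u ⊗ₜ[k] s) = u ⊗ₜ[k] (d1A cm s) := rfl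
@[simp] lemma j34A_tmul (u : H) (s : H ⊗[k] H) :
    j34A cm (u ⊗ₜ[k] s) = u ⊗ₜ[k] (d2A cm s) := rfl
@[simp] lemma i234A_apply (t : T3 k H) : i234A (k := k) (H := H) t = (1:H) ⊗ₜ[k] t := rfl

/-- kill the first tensor slot using the counit -/
def kill1 : T2 k H →ₐ[k] H :=
  (Algebra.TensorProduct.lid k H).toAlgHom.comp
    (Algebra.TensorProduct.map ct (AlgHom.id k H))

@[simp] lemma kill1_tmul (a b : H) : kill1 ct (a ⊗ₜ[k] b) = ct a • b := rfl

def e1A : T3 k H →ₐ[k] T2 k H :=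
  (Algebra.TensorProduct.lid k (H ⊗[k] H)).toAlgHom.comp
    (Algebra.TensorProduct.map ct (AlgHom.id k (H ⊗[k] H)))

@[simp] lemma e1A_tmul (u : H) (s : H ⊗[k] H) : e1A ct (u ⊗ₜ[k] s) = ct u • s := rfl

def e2A : T3 k H →ₐ[k] T2 k H :=
  Algebra.TensorProduct.map (AlgHom.id k H) (kill1 ct)

@[simp] lemma e2A_tmul (u : H) (s : H ⊗[k] H) : e2A ct (u ⊗ₜ[k] s) = u ⊗ₜ[k] (kill1 ct s) := rfl

/-- kill first slot of T4 -/
def e1A4 : T4 k H →ₐ[k] T3 k H :=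
  (Algebra.TensorProduct.lid k (H ⊗[k] (H ⊗[k] H))).toAlgHom.comp
    (Algebra.TensorProduct.map ct (AlgHom.id k (H ⊗[k] (H ⊗[k] H))))

@[simp] lemma e1A4_tmul (u : H) (s : H ⊗[k] (H ⊗[k] H)) : e1A4 ct (u ⊗ₜ[k] s) = ct u • s := rfl

/-- kill slots 1 and 2 of T4 -/
def qA : T4 k H →ₐ[k] T2 k H := (e1A ct).comp (e1A4 ct)

@[simp] lemma qA_tmul (u : H) (s : H ⊗[k] (H ⊗[k] H)) : qA ct (u ⊗ₜ[k] s) = ct u • e1A ct s := by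
  simp [qA, map_smul]

lemma assoc_coe (x : (H ⊗[k] H) ⊗[k] H) :
    Algebra.TensorProduct.assoc k k k H H H x = TensorProduct.assoc k H H H x := rfl

lemma assoc_coe' (x : (H ⊗[k] H) ⊗[k] (H ⊗[k] H)) :
    Algebra.TensorProduct.assoc k k k H H (H ⊗[k] H) x = TensorProduct.assoc k H H (H ⊗[k] H) x := rfl

end Alg

section Trans
variable {k H : Type} [Field k] [Ring H] [Algebra k H] (Q : QuasiHopf k H)

lemma kill1_lin (ct : H →ₐ[k] k) (s : H ⊗[k] H) :
    kill1 ct s = (TensorProduct.lid k H)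
      ((TensorProduct.map ct.toLinearMap (LinearMap.id : H →ₗ[k] H)) s) := by
  induction s using TensorProduct.induction_on with
  | zero => simp only [zero_tmul, tmul_zero, map_zero]
  | tmul a b => simp
  | add x y hx hy => simp [map_add, hx, hy]

lemma kill1_comul (h : H) : kill1 Q.counit (Q.comul h) = h := by
  rw [kill1_lin]; exact Q.counit_left h

lemma e2A_lin (ct : H →ₐ[k] k) (x : T3 k H) :
    e2A ct x = (TensorProduct.map (LinearMap.id : H →ₗ[k] H)
        ((TensorProduct.lid k H).toLinearMap ∘ₗ
          TensorProduct.map ct.toLinearMap (LinearMap.id : H →ₗ[k] H))) x := by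
  induction x using TensorProduct.induction_on with
  | zero => simp only [zero_tmul, tmul_zero, map_zero]
  | tmul u s => simp [kill1_lin]
  | add x y hx hy => simp [map_add, hx, hy]

lemma e2A_phi : e2A Q.counit Q.phi = 1 := by
  rw [e2A_lin]; exact Q.counit_phi

lemma e2A_phiInv : e2A Q.counit Q.phiInv = 1 := by
  have := congrArg (e2A Q.counit) Q.phi_inv
  rw [map_mul, map_one, e2A_phi] at this
  simpa using this

-- pentagon translation
lemma j23A_lin (x : T3 k H) :
    (TensorProduct.map (LinearMap.id : H →ₗ[k] H)
      ((TensorProduct.assoc k H H H).toLinearMap ∘ₗ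
        TensorProduct.map Q.comul.toLinearMap (LinearMap.id : H →ₗ[k] H))) x
      = j23A Q.comul x := by
  induction x using TensorProduct.induction_on with
  | zero => simp only [zero_tmul, tmul_zero, map_zero]
  | tmul u s =>
    induction s using TensorProduct.induction_on with
    | zero => simp only [zero_tmul, tmul_zero, map_zero]
    | tmul v w => simp [assoc_coe]
    | add a b ha hb => simp only [tmul_add, map_add, ha, hb]
  | add x y hx hy => simp [map_add, hx, hy]

lemma j123A_lin (x : T3 k H) :
    (TensorProduct.map (LinearMap.id : H →ₗ[k] H) (TensorProduct.assoc k H H H).toLinearMap)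
      ((TensorProduct.assoc k H (H ⊗[k] H) H) (x ⊗ₜ[k] (1 : H)))
      = j123A x := by
  induction x using TensorProduct.induction_on with
  | zero => simp only [zero_tmul, tmul_zero, map_zero]
  | tmul u s =>
    induction s using TensorProduct.induction_on with
    | zero => simp only [zero_tmul, tmul_zero, map_zero]
    | tmul v w => simp
    | add a b ha hb => simp only [tmul_add, add_tmul, map_add, ha, hb]
  | add x y hx hy => simp only [add_tmul, map_add, hx, hy]

lemma j34A_lin (x : T3 k H) :
    (TensorProduct.map (LinearMap.id : H →ₗ[k] H)
      (TensorProduct.map (LinearMap.id : H →ₗ[k] H) Q.comul.toLinearMap)) x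
      = j34A Q.comul x := by
  induction x using TensorProduct.induction_on with
  | zero => simp only [zero_tmul, tmul_zero, map_zero]
  | tmul u s =>
    induction s using TensorProduct.induction_on with
    | zero => simp only [zero_tmul, tmul_zero, map_zero]
    | tmul v w => simp
    | add a b ha hb => simp only [tmul_add, map_add, ha, hb]
  | add x y hx hy => simp [map_add, hx, hy]

lemma j12A_lin (x : T3 k H) :
    (TensorProduct.assoc k H H (H ⊗[k] H))
      ((TensorProduct.map Q.comul.toLinearMap (LinearMap.id : H ⊗[k] H →ₗ[k] H ⊗[k] H)) x)
      = j12A Q.comul x := by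
  induction x using TensorProduct.induction_on with
  | zero => simp only [zero_tmul, tmul_zero, map_zero]
  | tmul u s => simp [assoc_coe']
  | add x y hx hy => simp [map_add, hx, hy]

lemma pentagonA :
    i234A Q.phi * j23A Q.comul Q.phi * j123A Q.phi
      = j34A Q.comul Q.phi * j12A Q.comul Q.phi := by
  have := Q.pentagon
  rwa [j23A_lin, j123A_lin, j34A_lin, j12A_lin] at this

lemma d1A_lin (x : T2 k H) :
    (TensorProduct.assoc k H H H)
      ((TensorProduct.map Q.comul.toLinearMap (LinearMap.id : H →ₗ[k] H)) x) = d1A Q.comul x := by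
  induction x using TensorProduct.induction_on with
  | zero => simp only [zero_tmul, tmul_zero, map_zero]
  | tmul a b => simp [assoc_coe]
  | add x y hx hy => simp [map_add, hx, hy]

lemma d2A_lin (x : T2 k H) :
    (TensorProduct.map (LinearMap.id : H →ₗ[k] H) Q.comul.toLinearMap) x = d2A Q.comul x := by
  induction x using TensorProduct.induction_on with
  | zero => simp only [zero_tmul, tmul_zero, map_zero]
  | tmul a b => simp
  | add x y hx hy => simp [map_add, hx, hy]

lemma quasi_coassocA (h : H) :
    d2A Q.comul (Q.comul h) = Q.phi * d1A Q.comul (Q.comul h) * Q.phiInv := by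
  have := Q.quasi_coassoc h
  rwa [d2A_lin, d1A_lin] at this

end Trans

section CounitPhi
variable {k H : Type} [Field k] [Ring H] [Algebra k H] (Q : QuasiHopf k H)

lemma qA_i234 (ct : H →ₐ[k] k) (x : T3 k H) : qA ct (i234A x) = e1A ct x := by
  rw [i234A_apply, qA_tmul, map_one, one_smul]

lemma e1A_d1A (x : T2 k H) : e1A Q.counit (d1A Q.comul x) = x := by
  induction x using TensorProduct.induction_on with
  | zero => simp only [map_zero]
  | tmul a b =>
    rw [d1A_tmul, assoc_coe]
    have : ∀ s : T2 k H, e1A Q.counit (TensorProduct.assoc k H H H (s ⊗ₜ[k] b))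
        = (kill1 Q.counit s) ⊗ₜ[k] b := by
      intro s
      induction s using TensorProduct.induction_on with
      | zero => simp only [zero_tmul, map_zero]
      | tmul p r => simp [smul_tmul']
      | add x y hx hy => rw [add_tmul, map_add, map_add, hx, hy, map_add, add_tmul]
    rw [this, kill1_comul]
  | add x y hx hy => simp only [map_add, hx, hy]

lemma qA_j23 (x : T3 k H) : qA Q.counit (j23A Q.comul x) = e1A Q.counit x := by
  induction x using TensorProduct.induction_on with
  | zero => simp only [map_zero]
  | tmul u s => rw [j23A_tmul, qA_tmul, e1A_d1A, e1A_tmul]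
  | add x y hx hy => simp only [map_add, hx, hy]

lemma e1A_inclLeft (ct : H →ₐ[k] k) (s : T2 k H) :
    e1A ct ((Algebra.TensorProduct.map (AlgHom.id k H)
        (Algebra.TensorProduct.includeLeft : H →ₐ[k] H ⊗[k] H)) s)
      = (kill1 ct s) ⊗ₜ[k] (1 : H) := by
  induction s using TensorProduct.induction_on with
  | zero => simp only [map_zero, zero_tmul]
  | tmul a b => simp [smul_tmul']
  | add x y hx hy => rw [map_add, map_add, hx, hy, map_add, add_tmul]

lemma qA_j123 (ct : H →ₐ[k] k) (x : T3 k H) :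
    qA ct (j123A x) = (kill1 ct (e2A ct x)) ⊗ₜ[k] (1 : H) := by
  induction x using TensorProduct.induction_on with
  | zero => simp only [map_zero, zero_tmul]
  | tmul u s =>
    rw [j123A_tmul, qA_tmul, e1A_inclLeft, e2A_tmul, kill1_tmul, smul_tmul']
  | add x y hx hy => rw [map_add, map_add, hx, hy, map_add, map_add, add_tmul]

lemma e1A_d2A (ct : H →ₐ[k] k) (cm : H →ₐ[k] H ⊗[k] H) (s : T2 k H) :
    e1A ct (d2A cm s) = cm (kill1 ct s) := by
  induction s using TensorProduct.induction_on with
  | zero => simp only [map_zero]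
  | tmul a b => rw [d2A_tmul, e1A_tmul, kill1_tmul, map_smul]
  | add x y hx hy => simp only [map_add, hx, hy]

lemma qA_j34 (ct : H →ₐ[k] k) (cm : H →ₐ[k] H ⊗[k] H) (x : T3 k H) :
    qA ct (j34A cm x) = cm (kill1 ct (e2A ct x)) := by
  induction x using TensorProduct.induction_on with
  | zero => simp only [map_zero]
  | tmul u s =>
    rw [j34A_tmul, qA_tmul, e1A_d2A, e2A_tmul, kill1_tmul, map_smul]
  | add x y hx hy => simp only [map_add, hx, hy]

lemma qA_assoc' (ct : H →ₐ[k] k) (t : T2 k H) (s : T2 k H) :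
    qA ct (Algebra.TensorProduct.assoc k k k H H (H ⊗[k] H) (t ⊗ₜ[k] s))
      = ct (kill1 ct t) • s := by
  induction t using TensorProduct.induction_on with
  | zero => simp only [zero_tmul, map_zero, zero_smul]
  | tmul p r =>
    rw [Algebra.TensorProduct.assoc_tmul, qA_tmul, e1A_tmul, kill1_tmul, map_smul,
      smul_smul, smul_eq_mul]
  | add x y hx hy =>
    rw [add_tmul, map_add, map_add, hx, hy, map_add, map_add, add_smul]

lemma qA_j12 (x : T3 k H) : qA Q.counit (j12A Q.comul x) = e1A Q.counit x := by
  induction x using TensorProduct.induction_on with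
  | zero => simp only [map_zero]
  | tmul u s => rw [j12A_tmul, qA_assoc', kill1_comul, e1A_tmul]
  | add x y hx hy => simp only [map_add, hx, hy]

lemma e1A_phi : e1A Q.counit Q.phi = 1 := by
  have P := congrArg (qA Q.counit) (pentagonA Q)
  rw [map_mul, map_mul, map_mul, qA_i234, qA_j23, qA_j123, qA_j34, qA_j12] at P
  simp only [e2A_phi, map_one, mul_one, one_mul, ← Algebra.TensorProduct.one_def] at P
  set E := e1A Q.counit Q.phi with hE
  have hP : E * E = E := P
  have hEF : E * e1A Q.counit Q.phiInv = 1 := by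
    rw [hE, ← map_mul, Q.phi_inv, map_one]
  calc E = (E * E) * e1A Q.counit Q.phiInv := by rw [mul_assoc, hEF, mul_one]
    _ = E * e1A Q.counit Q.phiInv := by rw [hP]
    _ = 1 := hEF

lemma e1A_phiInv : e1A Q.counit Q.phiInv = 1 := by
  have h := congrArg (e1A Q.counit) Q.phi_inv
  rw [map_mul, map_one, e1A_phi] at h
  simpa using h

end CounitPhi

section Rep
variable {k : Type} [Field k]

theorem exists_fin_rep {M N : Type} [AddCommGroup M] [AddCommGroup N] [Module k M] [Module k N]
    (t : M ⊗[k] N) : ∃ (n : ℕ) (f : Fin n → M) (g : Fin n → N), t = ∑ i, f i ⊗ₜ[k] g i := by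
  induction t with
  | zero => exact ⟨0, ![], ![], by simp⟩
  | tmul m n => exact ⟨1, fun _ => m, fun _ => n, by simp⟩
  | add x y hx hy =>
    obtain ⟨n, f, g, rfl⟩ := hx
    obtain ⟨m, f', g', rfl⟩ := hy
    refine ⟨n + m, Fin.append f f', Fin.append g g', ?_⟩
    rw [Fin.sum_univ_add]
    simp [Fin.append]

theorem exists_fin_rep3 {M N P : Type} [AddCommGroup M] [AddCommGroup N] [AddCommGroup P]
    [Module k M] [Module k N] [Module k P]
    (t : M ⊗[k] (N ⊗[k] P)) :
    ∃ (n : ℕ) (f : Fin n → M) (g : Fin n → N) (h : Fin n → P),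
      t = ∑ i, f i ⊗ₜ[k] (g i ⊗ₜ[k] h i) := by
  induction t with
  | zero => exact ⟨0, ![], ![], ![], by simp⟩
  | tmul m s =>
    obtain ⟨n, g, h, rfl⟩ := exists_fin_rep s
    exact ⟨n, fun _ => m, g, h, by rw [tmul_sum]⟩
  | add x y hx hy =>
    obtain ⟨n, f, g, h, rfl⟩ := hx
    obtain ⟨m, f', g', h', rfl⟩ := hy
    refine ⟨n + m, Fin.append f f', Fin.append g g', Fin.append h h', ?_⟩
    rw [Fin.sum_univ_add]
    simp [Fin.append]
end Rep

section T4R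
variable {k H : Type} [Field k] [Ring H] [Algebra k H]
lemma t4_mul_def (a b : T4 k H) : a * b = Algebra.TensorProduct.mul a b := rfl
lemma t4_zero_mul (a : T4 k H) : 0 * a = 0 := zero_mul a
lemma t4_mul_zero (a : T4 k H) : a * 0 = 0 := mul_zero a
lemma t4_add_mul (a b c : T4 k H) : (a + b) * c = a * c + b * c := by
  simp only [t4_mul_def, map_add, LinearMap.add_apply]
lemma t4_mul_add (a b c : T4 k H) : a * (b + c) = a * b + a * c := by
  simp only [t4_mul_def, map_add]
lemma t4_mul_assoc (a b c : T4 k H) : a * b * c = a * (b * c) := mul_assoc a b c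
lemma t4_one_mul (a : T4 k H) : 1 * a = a := one_mul a
lemma t4_mul_one (a : T4 k H) : a * 1 = a := mul_one a
lemma t3_mul_assoc (a b c : T3 k H) : a * b * c = a * (b * c) := mul_assoc a b c
lemma t3_one_mul (a : T3 k H) : 1 * a = a := one_mul a
lemma t3_mul_one (a : T3 k H) : a * 1 = a := mul_one a
lemma t2_mul_assoc (a b c : T2 k H) : a * b * c = a * (b * c) := mul_assoc a b c
lemma t2_one_mul (a : T2 k H) : 1 * a = a := one_mul a
lemma t2_mul_one (a : T2 k H) : a * 1 = a := mul_one a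
end T4R

section BSide
variable {k H : Type} [Field k] [Ring H] [Algebra k H] (Q : QuasiHopf k H)
variable {B : Type} [AddCommGroup B] [Module k B] [Module H B]
  [IsScalarTower k H B] [SMulCommClass k H B]
variable (mulB : B →ₗ[k] B →ₗ[k] B) (oneB : B)

lemma cancel_left {R : Type} [Monoid R] {u v x y : R} (h1 : v * u = 1) (h : u * x = u * y) :
    x = y := by
  have h2 := congrArg (v * ·) h
  simpa [← mul_assoc, h1] using h2

lemma prodSlots (u v u' v' : H) (s s' : T2 k H) :
    ((u ⊗ₜ[k] (v ⊗ₜ[k] s)) : T4 k H) * (u' ⊗ₜ[k] (v' ⊗ₜ[k] s'))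
      = (u * u') ⊗ₜ[k] ((v * v') ⊗ₜ[k] (s * s')) := by
  rw [Algebra.TensorProduct.tmul_mul_tmul, Algebra.TensorProduct.tmul_mul_tmul]

lemma hmodL
    (hmod : ∀ (h : H) (b c : B) (n : ℕ) (h1 h2 : Fin n → H),
      Q.comul h = ∑ j, h1 j ⊗ₜ[k] h2 j →
      h • mulB b c = ∑ j, mulB (h1 j • b) (h2 j • c))
    (h : H) (b c : B) : h • mulB b c = F2L mulB b c (Q.comul h) := by
  obtain ⟨n, h1, h2, hrep⟩ := exists_fin_rep (Q.comul h)
  rw [hmod h b c n h1 h2 hrep, hrep, map_sum]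
  simp

lemma hassocL
    (hassoc : ∀ (b c d : B) (nX : ℕ) (X1 X2 X3 : Fin nX → H),
      Q.phi = ∑ i, X1 i ⊗ₜ[k] (X2 i ⊗ₜ[k] X3 i) →
      mulB (mulB b c) d = ∑ i, mulB (X1 i • b) (mulB (X2 i • c) (X3 i • d)))
    (b c d : B) : mulB (mulB b c) d = F3L mulB b c d Q.phi := by
  obtain ⟨n, X1, X2, X3, hrep⟩ := exists_fin_rep3 Q.phi
  rw [hassoc b c d n X1 X2 X3 hrep, hrep, map_sum]
  simp

lemma hmuL (μ : B ⊗[k] H →ₗ[k] B ⊗[k] H →ₗ[k] B ⊗[k] H)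
    (hμ : ∀ (b : B) (h : H) (c : B) (g : H)
        (nx : ℕ) (x1 x2 x3 : Fin nx → H) (n : ℕ) (h1 h2 : Fin n → H),
      Q.phiInv = ∑ i, x1 i ⊗ₜ[k] (x2 i ⊗ₜ[k] x3 i) →
      Q.comul h = ∑ j, h1 j ⊗ₜ[k] h2 j →
      μ (b ⊗ₜ[k] h) (c ⊗ₜ[k] g)
        = ∑ i, ∑ j, (mulB (x1 i • b) ((x2 i * h1 j) • c)) ⊗ₜ[k] (x3 i * h2 j * g))
    (b : B) (h : H) (c : B) (g : H) :
    μ (b ⊗ₜ[k] h) (c ⊗ₜ[k] g)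
      = GG mulB b c (Q.phiInv * ((1:H) ⊗ₜ[k] Q.comul h) * ((1:H) ⊗ₜ[k] ((1:H) ⊗ₜ[k] g))) := by
  obtain ⟨nx, x1, x2, x3, hx⟩ := exists_fin_rep3 Q.phiInv
  obtain ⟨n, h1, h2, hh⟩ := exists_fin_rep (Q.comul h)
  rw [hμ b h c g nx x1 x2 x3 n h1 h2 hx hh, hx, hh]
  simp only [tmul_sum, Finset.sum_mul, Finset.mul_sum, Algebra.TensorProduct.tmul_mul_tmul,
    one_mul, mul_one, map_sum, GG_tmul, mul_assoc]
  exact Finset.sum_comm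

lemma lemC (ψ : T3 k H) (a a' q r : H) (b c d : B) :
    F3L mulB (a • b) (a' • c) (q • d) ψ ⊗ₜ[k] r
      = KK mulB b c d (j123A ψ * (a ⊗ₜ[k] (a' ⊗ₜ[k] (q ⊗ₜ[k] r)))) := by
  induction ψ using TensorProduct.induction_on with
  | zero => simp only [map_zero, zero_tmul, t4_zero_mul]
  | tmul X s =>
    induction s using TensorProduct.induction_on with
    | zero => simp only [tmul_zero, map_zero, zero_tmul, t4_zero_mul]
    | tmul Y Z =>
      rw [F3L_tmul, j123A_tmul', prodSlots, Algebra.TensorProduct.tmul_mul_tmul, one_mul,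
        KK_tmul, mul_smul, mul_smul, mul_smul]
    | add x y hx hy =>
      simp only [tmul_add, map_add, add_tmul, t4_add_mul, LinearMap.add_apply, hx, hy]
  | add x y hx hy =>
    simp only [map_add, add_tmul, t4_add_mul, LinearMap.add_apply, hx, hy]

lemma lemB
    (hassoc : ∀ (b c d : B) (nX : ℕ) (X1 X2 X3 : Fin nX → H),
      Q.phi = ∑ i, X1 i ⊗ₜ[k] (X2 i ⊗ₜ[k] X3 i) →
      mulB (mulB b c) d = ∑ i, mulB (X1 i • b) (mulB (X2 i • c) (X3 i • d)))
    (t : T2 k H) (q r : H) (b c d : B) :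
    mulB (F2L mulB b c t) (q • d) ⊗ₜ[k] r
      = KK mulB b c d (j123A Q.phi
          * (TensorProduct.assoc k H H (H ⊗[k] H)) (t ⊗ₜ[k] (q ⊗ₜ[k] r))) := by
  induction t using TensorProduct.induction_on with
  | zero => simp only [map_zero, zero_tmul, LinearMap.map_zero, LinearMap.zero_apply,
      t4_mul_zero]
  | tmul a a' =>
    rw [F2L_tmul, hassocL Q mulB hassoc, lemC, assoc_tmul]
  | add x y hx hy =>
    simp only [map_add, LinearMap.add_apply, add_tmul, t4_mul_add, hx, hy]

lemma lemA
    (hmod : ∀ (h : H) (b c : B) (n : ℕ) (h1 h2 : Fin n → H),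
      Q.comul h = ∑ j, h1 j ⊗ₜ[k] h2 j →
      h • mulB b c = ∑ j, mulB (h1 j • b) (h2 j • c))
    (hassoc : ∀ (b c d : B) (nX : ℕ) (X1 X2 X3 : Fin nX → H),
      Q.phi = ∑ i, X1 i ⊗ₜ[k] (X2 i ⊗ₜ[k] X3 i) →
      mulB (mulB b c) d = ∑ i, mulB (X1 i • b) (mulB (X2 i • c) (X3 i • d)))
    (s : T3 k H) (b c d : B) :
    GG mulB (mulB b c) d s = KK mulB b c d (j123A Q.phi * j12A Q.comul s) := by
  induction s using TensorProduct.induction_on with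
  | zero => simp only [map_zero, t4_mul_zero]
  | tmul p s' =>
    induction s' using TensorProduct.induction_on with
    | zero => simp only [tmul_zero, map_zero, t4_mul_zero]
    | tmul q r =>
      rw [GG_tmul, hmodL Q mulB hmod, lemB Q mulB hassoc, j12A_tmul, assoc_coe']
    | add x y hx hy =>
      simp only [tmul_add, map_add, t4_mul_add, hx, hy]
  | add x y hx hy =>
    simp only [map_add, t4_mul_add, hx, hy]

lemma lemShift (X : T4 k H) (u v : H) (b c d : B) :
    KK mulB (u • b) (v • c) d X
      = KK mulB b c d (X * (u ⊗ₜ[k] (v ⊗ₜ[k] ((1:H) ⊗ₜ[k] (1:H))))) := by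
  induction X using TensorProduct.induction_on with
  | zero => simp only [map_zero, t4_zero_mul]
  | tmul p s =>
    induction s using TensorProduct.induction_on with
    | zero => simp only [tmul_zero, map_zero, t4_zero_mul]
    | tmul q s' =>
      induction s' using TensorProduct.induction_on with
      | zero => simp only [tmul_zero, map_zero, t4_zero_mul]
      | tmul r w =>
        rw [KK_tmul, prodSlots, Algebra.TensorProduct.tmul_mul_tmul, mul_one, mul_one,
          KK_tmul, mul_smul, mul_smul]
      | add x y hx hy =>
        simp only [tmul_add, map_add, t4_add_mul, hx, hy]
    | add x y hx hy =>
      simp only [tmul_add, map_add, t4_add_mul, hx, hy]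
  | add x y hx hy =>
    simp only [map_add, t4_add_mul, hx, hy]

end BSide

section Main
variable {k H : Type} [Field k] [Ring H] [Algebra k H] (Q : QuasiHopf k H)
variable {B : Type} [AddCommGroup B] [Module k B] [Module H B]
  [IsScalarTower k H B] [SMulCommClass k H B]
variable (mulB : B →ₗ[k] B →ₗ[k] B) (oneB : B)

lemma j12A_one (cm : H →ₐ[k] H ⊗[k] H) (s : T2 k H) :
    j12A cm ((1:H) ⊗ₜ[k] s) = (1:H) ⊗ₜ[k] ((1:H) ⊗ₜ[k] s) := by
  rw [j12A_tmul, map_one, Algebra.TensorProduct.one_def, Algebra.TensorProduct.assoc_tmul]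

lemma d1A_one (cm : H →ₐ[k] H ⊗[k] H) (w : H) :
    d1A cm ((1:H) ⊗ₜ[k] w) = (1:H) ⊗ₜ[k] ((1:H) ⊗ₜ[k] w) := by
  rw [d1A_tmul, map_one, Algebra.TensorProduct.one_def, Algebra.TensorProduct.assoc_tmul]

lemma lemD
    (hmod : ∀ (h : H) (b c : B) (n : ℕ) (h1 h2 : Fin n → H),
      Q.comul h = ∑ j, h1 j ⊗ₜ[k] h2 j →
      h • mulB b c = ∑ j, mulB (h1 j • b) (h2 j • c))
    (hassoc : ∀ (b c d : B) (nX : ℕ) (X1 X2 X3 : Fin nX → H),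
      Q.phi = ∑ i, X1 i ⊗ₜ[k] (X2 i ⊗ₜ[k] X3 i) →
      mulB (mulB b c) d = ∑ i, mulB (X1 i • b) (mulB (X2 i • c) (X3 i • d)))
    (μ : B ⊗[k] H →ₗ[k] B ⊗[k] H →ₗ[k] B ⊗[k] H)
    (hμ : ∀ (b : B) (h : H) (c : B) (g : H)
        (nx : ℕ) (x1 x2 x3 : Fin nx → H) (n : ℕ) (h1 h2 : Fin n → H),
      Q.phiInv = ∑ i, x1 i ⊗ₜ[k] (x2 i ⊗ₜ[k] x3 i) →
      Q.comul h = ∑ j, h1 j ⊗ₜ[k] h2 j →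
      μ (b ⊗ₜ[k] h) (c ⊗ₜ[k] g)
        = ∑ i, ∑ j, (mulB (x1 i • b) ((x2 i * h1 j) • c)) ⊗ₜ[k] (x3 i * h2 j * g))
    (t : T3 k H) (b c d : B) (f : H) :
    μ (GG mulB b c t) (d ⊗ₜ[k] f)
      = KK mulB b c d ((j123A Q.phi * j12A Q.comul Q.phiInv)
          * (j34A Q.comul t * ((1:H) ⊗ₜ[k] ((1:H) ⊗ₜ[k] ((1:H) ⊗ₜ[k] f))))) := by
  induction t using TensorProduct.induction_on with
  | zero => simp only [map_zero, LinearMap.map_zero, LinearMap.zero_apply, t4_zero_mul,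
      t4_mul_zero]
  | tmul u s =>
    induction s using TensorProduct.induction_on with
    | zero => simp only [tmul_zero, map_zero, LinearMap.map_zero, LinearMap.zero_apply,
        t4_zero_mul, t4_mul_zero]
    | tmul v w =>
      rw [GG_tmul, hmuL Q mulB μ hμ, lemA Q mulB hmod hassoc, lemShift,
        map_mul (f := j12A Q.comul), map_mul (f := j12A Q.comul),
        j12A_one, j12A_one, j34A_tmul, d2A_tmul]
      congr 1
      simp only [t4_mul_assoc, t3_mul_assoc, t2_mul_assoc, Algebra.TensorProduct.tmul_mul_tmul,
        one_mul, mul_one, ← Algebra.TensorProduct.one_def, t3_mul_one, t3_one_mul,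
        t2_mul_one, t2_one_mul, t4_mul_one, t4_one_mul]
    | add x y hx hy =>
      simp only [tmul_add, map_add, LinearMap.map_add, LinearMap.add_apply, t4_add_mul,
        t4_mul_add, hx, hy]
  | add x y hx hy =>
    simp only [map_add, LinearMap.map_add, LinearMap.add_apply, t4_add_mul, t4_mul_add, hx, hy]

lemma lemE2 (t : T2 k H) (p r u v : H) (b c d : B) :
    mulB (p • b) (F2L mulB (u • c) (v • d) t) ⊗ₜ[k] r
      = KK mulB b c d ((p ⊗ₜ[k] (Algebra.TensorProduct.assoc k k k H H H (t ⊗ₜ[k] r)))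
          * ((1:H) ⊗ₜ[k] (u ⊗ₜ[k] (v ⊗ₜ[k] (1:H))))) := by
  induction t using TensorProduct.induction_on with
  | zero => simp only [map_zero, LinearMap.map_zero, LinearMap.zero_apply, zero_tmul,
      tmul_zero, t4_zero_mul]
  | tmul a a' =>
    rw [F2L_tmul, Algebra.TensorProduct.assoc_tmul]
    simp only [Algebra.TensorProduct.tmul_mul_tmul, one_mul, mul_one, KK_tmul, mul_smul]
  | add x y hx hy =>
    simp only [map_add, LinearMap.map_add, LinearMap.add_apply, add_tmul, tmul_add,
      t4_add_mul, hx, hy]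

lemma lemE1
    (hmod : ∀ (h : H) (b c : B) (n : ℕ) (h1 h2 : Fin n → H),
      Q.comul h = ∑ j, h1 j ⊗ₜ[k] h2 j →
      h • mulB b c = ∑ j, mulB (h1 j • b) (h2 j • c))
    (s : T3 k H) (u v : H) (b c d : B) :
    GG mulB b (mulB (u • c) (v • d)) s
      = KK mulB b c d (j23A Q.comul s * ((1:H) ⊗ₜ[k] (u ⊗ₜ[k] (v ⊗ₜ[k] (1:H))))) := by
  induction s using TensorProduct.induction_on with
  | zero => simp only [map_zero, t4_zero_mul]
  | tmul p s' =>
    induction s' using TensorProduct.induction_on with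
    | zero => simp only [tmul_zero, map_zero, t4_zero_mul]
    | tmul q r =>
      rw [GG_tmul, hmodL Q mulB hmod, lemE2, j23A_tmul, d1A_tmul]
    | add x y hx hy =>
      simp only [tmul_add, map_add, t4_add_mul, hx, hy]
  | add x y hx hy =>
    simp only [map_add, t4_add_mul, hx, hy]

lemma lemE
    (hmod : ∀ (h : H) (b c : B) (n : ℕ) (h1 h2 : Fin n → H),
      Q.comul h = ∑ j, h1 j ⊗ₜ[k] h2 j →
      h • mulB b c = ∑ j, mulB (h1 j • b) (h2 j • c))
    (μ : B ⊗[k] H →ₗ[k] B ⊗[k] H →ₗ[k] B ⊗[k] H)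
    (hμ : ∀ (b : B) (h : H) (c : B) (g : H)
        (nx : ℕ) (x1 x2 x3 : Fin nx → H) (n : ℕ) (h1 h2 : Fin n → H),
      Q.phiInv = ∑ i, x1 i ⊗ₜ[k] (x2 i ⊗ₜ[k] x3 i) →
      Q.comul h = ∑ j, h1 j ⊗ₜ[k] h2 j →
      μ (b ⊗ₜ[k] h) (c ⊗ₜ[k] g)
        = ∑ i, ∑ j, (mulB (x1 i • b) ((x2 i * h1 j) • c)) ⊗ₜ[k] (x3 i * h2 j * g))
    (t : T3 k H) (b c d : B) (h : H) :
    μ (b ⊗ₜ[k] h) (GG mulB c d t)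
      = KK mulB b c d (j23A Q.comul Q.phiInv
          * (((1:H) ⊗ₜ[k] (d1A Q.comul (Q.comul h))) * ((1:H) ⊗ₜ[k] t))) := by
  induction t using TensorProduct.induction_on with
  | zero => simp only [map_zero, LinearMap.map_zero, tmul_zero, t4_mul_zero]
  | tmul u s =>
    induction s using TensorProduct.induction_on with
    | zero => simp only [tmul_zero, map_zero, LinearMap.map_zero, t4_mul_zero]
    | tmul v w =>
      rw [GG_tmul, hmuL Q mulB μ hμ, lemE1 Q mulB hmod,
        map_mul (f := j23A Q.comul), map_mul (f := j23A Q.comul), j23A_tmul,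
        j23A_tmul, d1A_one]
      simp only [t4_mul_assoc, t3_mul_assoc, t2_mul_assoc, Algebra.TensorProduct.tmul_mul_tmul,
        one_mul, mul_one, ← Algebra.TensorProduct.one_def, t3_mul_one, t3_one_mul,
        t2_mul_one, t2_one_mul, t4_mul_one, t4_one_mul]
    | add x y hx hy =>
      simp only [tmul_add, map_add, LinearMap.map_add, t4_mul_add, hx, hy]
  | add x y hx hy =>
    simp only [tmul_add, map_add, LinearMap.map_add, t4_mul_add, hx, hy]

lemma lemKey :
    j123A Q.phi * j12A Q.comul Q.phiInv * j34A Q.comul Q.phiInv * i234A Q.phi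
      = j23A Q.comul Q.phiInv := by
  have pi : ∀ (f : T3 k H →ₐ[k] T4 k H), f Q.phi * f Q.phiInv = 1 := fun f => by
    rw [← map_mul, Q.phi_inv]; exact f.map_one'
  have ip : ∀ (f : T3 k H →ₐ[k] T4 k H), f Q.phiInv * f Q.phi = 1 := fun f => by
    rw [← map_mul, Q.inv_phi]; exact f.map_one'
  have m1 : i234A Q.phi * (j23A Q.comul Q.phi
      * (j123A Q.phi * j12A Q.comul Q.phiInv * j34A Q.comul Q.phiInv * i234A Q.phi))
      = i234A Q.phi := by
    simp only [← t4_mul_assoc]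
    rw [pentagonA Q, t4_mul_assoc (j34A Q.comul Q.phi), pi (j12A Q.comul), t4_mul_one,
      pi (j34A Q.comul), t4_one_mul]
  have m2 : i234A Q.phi * (j23A Q.comul Q.phi * j23A Q.comul Q.phiInv) = i234A Q.phi := by
    rw [pi (j23A Q.comul), t4_mul_one]
  have h := m1.trans m2.symm
  have h2 : j23A Q.comul Q.phi
        * (j123A Q.phi * j12A Q.comul Q.phiInv * j34A Q.comul Q.phiInv * i234A Q.phi)
      = j23A Q.comul Q.phi * j23A Q.comul Q.phiInv :=
    cancel_left (v := i234A Q.phiInv) (ip _) h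
  exact cancel_left (v := j23A Q.comul Q.phiInv) (ip _) h2

lemma lemGB1 (hone : ∀ h : H, h • oneB = Q.counit h • oneB)
    (hunit : ∀ b : B, mulB oneB b = b ∧ mulB b oneB = b) (c : B) (t : T3 k H) :
    GG mulB oneB c t = (TensorProduct.map (abL c) LinearMap.id) (e1A Q.counit t) := by
  induction t using TensorProduct.induction_on with
  | zero => simp only [map_zero]
  | tmul u s =>
    induction s using TensorProduct.induction_on with
    | zero => simp only [tmul_zero, map_zero]
    | tmul v w =>
      rw [GG_tmul, hone u, map_smul mulB, LinearMap.smul_apply, (hunit (v • c)).1, e1A_tmul]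
      simp [smul_tmul']
    | add x y hx hy => simp only [tmul_add, map_add, hx, hy]
  | add x y hx hy => simp only [map_add, hx, hy]

lemma lemGB2 (hone : ∀ h : H, h • oneB = Q.counit h • oneB)
    (hunit : ∀ b : B, mulB oneB b = b ∧ mulB b oneB = b) (b : B) (t : T3 k H) :
    GG mulB b oneB t = (TensorProduct.map (abL b) LinearMap.id) (e2A Q.counit t) := by
  induction t using TensorProduct.induction_on with
  | zero => simp only [map_zero]
  | tmul u s =>
    induction s using TensorProduct.induction_on with
    | zero => simp only [tmul_zero, map_zero]
    | tmul v w =>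
      rw [GG_tmul, hone v, map_smul (mulB (u • b)), (hunit (u • b)).2, e2A_tmul, kill1_tmul]
      simp [smul_tmul', tmul_smul]
    | add x y hx hy => simp only [tmul_add, map_add, hx, hy]
  | add x y hx hy => simp only [map_add, hx, hy]

end Main

/-- if `B` is a quasi-associative unital `H`-module algebra (an algebra in
the category of left `H`-modules, with the associativity constraint given by `φ`), then
the bosonisation product on `B ⊗ H`,
`(b⊗h)(c⊗g) = (x¹▷b)·(x²h₁▷c) ⊗ x³h₂g`, is associative with two-sided unit `1_B ⊗ 1`. -/
theorem stmt8 {k H : Type} [Field k] [Ring H] [Algebra k H] (Q : QuasiHopf k H)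
    (B : Type) [AddCommGroup B] [Module k B] [Module H B]
    [IsScalarTower k H B] [SMulCommClass k H B]
    (mulB : B →ₗ[k] B →ₗ[k] B) (oneB : B)
    (hmod : ∀ (h : H) (b c : B) (n : ℕ) (h1 h2 : Fin n → H),
      Q.comul h = ∑ j, h1 j ⊗ₜ[k] h2 j →
      h • mulB b c = ∑ j, mulB (h1 j • b) (h2 j • c))
    (hone : ∀ h : H, h • oneB = Q.counit h • oneB)
    (hassoc : ∀ (b c d : B) (nX : ℕ) (X1 X2 X3 : Fin nX → H),
      Q.phi = ∑ i, X1 i ⊗ₜ[k] (X2 i ⊗ₜ[k] X3 i) →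
      mulB (mulB b c) d = ∑ i, mulB (X1 i • b) (mulB (X2 i • c) (X3 i • d)))
    (hunit : ∀ b : B, mulB oneB b = b ∧ mulB b oneB = b)
    (μ : B ⊗[k] H →ₗ[k] B ⊗[k] H →ₗ[k] B ⊗[k] H)
    (hμ : ∀ (b : B) (h : H) (c : B) (g : H)
        (nx : ℕ) (x1 x2 x3 : Fin nx → H) (n : ℕ) (h1 h2 : Fin n → H),
      Q.phiInv = ∑ i, x1 i ⊗ₜ[k] (x2 i ⊗ₜ[k] x3 i) →
      Q.comul h = ∑ j, h1 j ⊗ₜ[k] h2 j →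
      μ (b ⊗ₜ[k] h) (c ⊗ₜ[k] g)
        = ∑ i, ∑ j, (mulB (x1 i • b) ((x2 i * h1 j) • c)) ⊗ₜ[k] (x3 i * h2 j * g)) :
    (∀ X Y Z : B ⊗[k] H, μ (μ X Y) Z = μ X (μ Y Z))
      ∧ (∀ X : B ⊗[k] H, μ (oneB ⊗ₜ[k] (1 : H)) X = X ∧ μ X (oneB ⊗ₜ[k] (1 : H)) = X) := by

  constructor
  · intro X Y Z
    induction X using TensorProduct.induction_on with
    | zero => simp only [map_zero, LinearMap.zero_apply, LinearMap.map_zero]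
    | add x y hx hy => simp only [map_add, LinearMap.add_apply, hx, hy]
    | tmul b h =>
      induction Y using TensorProduct.induction_on with
      | zero => simp only [map_zero, LinearMap.zero_apply, LinearMap.map_zero]
      | add x y hx hy => simp only [map_add, LinearMap.add_apply, hx, hy]
      | tmul c g =>
        induction Z using TensorProduct.induction_on with
        | zero => simp only [map_zero, LinearMap.map_zero]
        | add x y hx hy => simp only [map_add, hx, hy]
        | tmul d f =>
          rw [hmuL Q mulB μ hμ b h c g, lemD Q mulB hmod hassoc μ hμ,
            hmuL Q mulB μ hμ c g d f, lemE Q mulB hmod μ hμ]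
          congr 1
          rw [map_mul (f := j34A Q.comul), map_mul (f := j34A Q.comul), j34A_tmul, j34A_tmul,
            quasi_coassocA Q h, d2A_tmul, ← lemKey Q]
          simp only [t4_mul_assoc, t3_mul_assoc, t2_mul_assoc, i234A_apply,
            Algebra.TensorProduct.tmul_mul_tmul, one_mul, mul_one,
            ← Algebra.TensorProduct.one_def, t3_mul_one, t3_one_mul, t2_mul_one, t2_one_mul,
            t4_mul_one, t4_one_mul]
  · have h1 : ((1:H) ⊗ₜ[k] (1 : H ⊗[k] H)) = (1 : T3 k H) :=
      (Algebra.TensorProduct.one_def).symm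
    have h2 : ((1:H) ⊗ₜ[k] (1 : H)) = (1 : T2 k H) :=
      (Algebra.TensorProduct.one_def).symm
    intro X
    constructor
    · induction X using TensorProduct.induction_on with
      | zero => simp only [map_zero]
      | add x y hx hy => simp only [map_add, hx, hy]
      | tmul c g =>
        rw [hmuL Q mulB μ hμ oneB 1 c g, map_one, h1, t3_mul_one,
          lemGB1 Q mulB oneB hone hunit, map_mul (f := e1A Q.counit), e1A_phiInv Q,
          t2_one_mul, e1A_tmul, map_one, one_smul]
        simp
    · induction X using TensorProduct.induction_on with
      | zero => simp only [map_zero, LinearMap.zero_apply]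
      | add x y hx hy => simp only [map_add, LinearMap.add_apply, hx, hy]
      | tmul b h =>
        rw [hmuL Q mulB μ hμ b h oneB 1, h2, h1, t3_mul_one,
          lemGB2 Q mulB oneB hone hunit, map_mul (f := e2A Q.counit), e2A_phiInv Q,
          t2_one_mul, e2A_tmul, kill1_comul Q h]
        simp
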